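/- Let n ≥ 1, t ≥ 1 be integers, let S be a t-PTMC in Λ_n, and suppose S is periodic with periods p_1,…,p_n ≥ 1, i.e. S + p_i e_i = S for all i ∈ {1,…,n}. Let k_1,…,k_n ≥ 1 be integers with m_i := k_i p_i ≥ 3 for all i, and let π : ℤ^n → ℤ/m_1ℤ × ⋯ × ℤ/m_nℤ be coordinatewise reduction. Then π(S) is a t-PTMC of the toroidal grid C_{m_1}□⋯□C_{m_n} with respect to the torus truncated distance. -/

import Mathlib

/-- The `n`-dimensional grid graph `Λ_n` on `ℤ^n`: two vertices are adjacent
iff their `ℓ1`-distance is `1`. -/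
def gridGraph (n : ℕ) : SimpleGraph (Fin n → ℤ) where
  Adj u v := ∑ i, |u i - v i| = 1
  symm := by
    constructor
    intro u v h
    beta_reduce at h ⊢
    have : ∑ i, |v i - u i| = ∑ i, |u i - v i| :=
      Finset.sum_congr rfl fun i _ => abs_sub_comm _ _
    rw [this]; exact h
  loopless := by
    constructor
    intro u h
    simp at h

/-- The truncated distance `ρ` on `ℤ^n` (valued in `ℕ`): the Hamming distance if
all coordinates differ by at most `1`, and `n+1` otherwise. -/
def trho (n : ℕ) (u v : Fin n → ℤ) : ℕ :=
  if ∀ i, |u i - v i| ≤ 1 then (Finset.univ.filter fun i => u i ≠ v i).card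
  else n + 1

/-- Truncated distance from a point to a set, as the infimum of truncated distances. -/
noncomputable def trhoSet (n : ℕ) (u : Fin n → ℤ) (S : Set (Fin n → ℤ)) : ℕ :=
  sInf {d | ∃ s ∈ S, trho n u s = d}

/-- The vertex set (in `ℤ^n`) of a connected component `H` of the subgraph of `Λ_n`
induced by `S`. -/
def compVerts (n : ℕ) (S : Set (Fin n → ℤ))
    (H : ((gridGraph n).induce S).ConnectedComponent) : Set (Fin n → ℤ) :=
  {v | ∃ h : v ∈ S, ((gridGraph n).induce S).connectedComponentMk ⟨v, h⟩ = H}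

/-- `S` is a `t`-perfect truncated-metric code in `Λ_n`. -/
def IsPTMC (n t : ℕ) (S : Set (Fin n → ℤ)) : Prop :=
  (∀ u : Fin n → ℤ, ∃! s, s ∈ S ∧ trho n u s = trhoSet n u S) ∧
  (∀ u : Fin n → ℤ, ∃! H : ((gridGraph n).induce S).ConnectedComponent,
    trhoSet n u (compVerts n S H) ≤ t)


/-- The toroidal grid `C_{m 0} □ ⋯ □ C_{m (n-1)}`: two vertices are adjacent iff they
differ in exactly one coordinate, by `±1` there. -/
def torusGraph (n : ℕ) (m : Fin n → ℕ) : SimpleGraph (Π i, ZMod (m i)) where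
  Adj u v := u ≠ v ∧ ∃ i, (v i = u i + 1 ∨ v i = u i - 1) ∧ ∀ j, j ≠ i → u j = v j
  symm := by
    constructor
    rintro u v ⟨hne, i, hi, hj⟩
    refine ⟨hne.symm, i, ?_, fun j hj' => (hj j hj').symm⟩
    rcases hi with h | h
    · right; rw [h]; ring
    · left; rw [h]; ring
  loopless := by
    constructor
    rintro u ⟨hne, -⟩
    exact hne rfl

/-- The torus truncated distance (valued in `ℕ`). -/
def ttrho (n : ℕ) (m : Fin n → ℕ) (u v : Π i, ZMod (m i)) : ℕ :=
  if ∀ i, u i = v i ∨ u i - v i = 1 ∨ u i - v i = -1 then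
    (Finset.univ.filter fun i => u i ≠ v i).card
  else n + 1

/-- Torus truncated distance from a point to a set. -/
noncomputable def ttrhoSet (n : ℕ) (m : Fin n → ℕ) (u : Π i, ZMod (m i))
    (S : Set (Π i, ZMod (m i))) : ℕ :=
  sInf {d | ∃ s ∈ S, ttrho n m u s = d}

/-- The vertex set of a connected component `H` of the subgraph of the toroidal grid
induced by `S`. -/
def tCompVerts (n : ℕ) (m : Fin n → ℕ) (S : Set (Π i, ZMod (m i)))
    (H : ((torusGraph n m).induce S).ConnectedComponent) : Set (Π i, ZMod (m i)) :=
  {v | ∃ h : v ∈ S, ((torusGraph n m).induce S).connectedComponentMk ⟨v, h⟩ = H}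

/-- `S` is a `t`-perfect truncated-metric code in the toroidal grid. -/
def IsTorusPTMC (n : ℕ) (m : Fin n → ℕ) (t : ℕ) (S : Set (Π i, ZMod (m i))) : Prop :=
  (∀ u : Π i, ZMod (m i), ∃! s, s ∈ S ∧ ttrho n m u s = ttrhoSet n m u S) ∧
  (∀ u : Π i, ZMod (m i), ∃! H : ((torusGraph n m).induce S).ConnectedComponent,
    ttrhoSet n m u (tCompVerts n m S H) ≤ t)

--- auxiliary lemmas ---
namespace Scratch

def pmap {n : ℕ} (m : Fin n → ℕ) (u : Fin n → ℤ) : Π i, ZMod (m i) :=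
  fun i => ((u i : ℤ) : ZMod (m i))

lemma coe_cases {M : ℕ} {a : ℤ} (h : |a| ≤ 1) :
    (a : ZMod M) = 0 ∨ (a : ZMod M) = 1 ∨ (a : ZMod M) = -1 := by
  obtain ⟨h1, h2⟩ := abs_le.mp h
  interval_cases a <;> simp

lemma coe_eq_zero_iff {M : ℕ} (hM : 3 ≤ M) {a : ℤ} (h : |a| ≤ 1) :
    ((a : ZMod M) = 0) ↔ a = 0 := by
  constructor
  · intro h0
    rw [ZMod.intCast_zmod_eq_zero_iff_dvd] at h0
    rcases eq_or_ne a 0 with h' | h'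
    · exact h'
    · exfalso
      have h2 := Int.le_of_dvd (abs_pos.mpr h') ((dvd_abs _ _).mpr h0)
      have h3 : (3 : ℤ) ≤ (M : ℤ) := by exact_mod_cast hM
      linarith
  · intro h'; simp [h']

lemma one_ne_zero' {M : ℕ} (hM : 3 ≤ M) : (1 : ZMod M) ≠ 0 := by
  have := (coe_eq_zero_iff (a := 1) hM (by norm_num)).not.mpr (by norm_num)
  simpa using this

lemma neg_one_ne_zero' {M : ℕ} (hM : 3 ≤ M) : (-1 : ZMod M) ≠ 0 := by
  have := (coe_eq_zero_iff (a := -1) hM (by norm_num)).not.mpr (by norm_num)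
  simpa using this

lemma one_ne_neg_one' {M : ℕ} (hM : 3 ≤ M) : (1 : ZMod M) ≠ -1 := by
  intro h
  have h2 : ((2 : ℤ) : ZMod M) = 0 := by push_cast; linear_combination h
  rw [ZMod.intCast_zmod_eq_zero_iff_dvd] at h2
  have := Int.le_of_dvd (by norm_num) h2
  have h3 : (3 : ℤ) ≤ (M : ℤ) := by exact_mod_cast hM
  linarith

end Scratch

namespace Scratch2
open Scratch

-- torus truncated distance is at most n+1
lemma ttrho_le (n : ℕ) (m : Fin n → ℕ) (u v : Π i, ZMod (m i)) : ttrho n m u v ≤ n + 1 := by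
  unfold ttrho
  split
  · calc (Finset.univ.filter fun i => u i ≠ v i).card ≤ Finset.univ.card :=
        Finset.card_filter_le _ _
      _ = n := by simp
      _ ≤ n + 1 := Nat.le_succ n
  · exact le_refl _

lemma sub_cast (n : ℕ) (m : Fin n → ℕ) (u v : Fin n → ℤ) (i : Fin n) :
    pmap m u i - pmap m v i = ((u i - v i : ℤ) : ZMod (m i)) := by
  simp [pmap]

lemma pmap_eq_iff (n : ℕ) (m : Fin n → ℕ) (u v : Fin n → ℤ) (i : Fin n) :
    pmap m u i = pmap m v i ↔ ((u i - v i : ℤ) : ZMod (m i)) = 0 := by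
  rw [← sub_cast, sub_eq_zero]

lemma ttrho_pmap_le (n : ℕ) (m : Fin n → ℕ) (u v : Fin n → ℤ) :
    ttrho n m (pmap m u) (pmap m v) ≤ trho n u v := by
  unfold trho
  by_cases h : ∀ i, |u i - v i| ≤ 1
  · rw [if_pos h]
    unfold ttrho
    rw [if_pos ?cond]
    case cond =>
      intro i
      have := coe_cases (M := m i) (h i)
      simp only [pmap_eq_iff, sub_cast]
      exact this
    apply Finset.card_le_card
    intro i hi
    simp only [Finset.mem_filter, Finset.mem_univ, true_and] at hi ⊢
    intro he
    exact hi (by simp [pmap, he])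
  · rw [if_neg h]; exact ttrho_le n m _ _

end Scratch2

namespace Scratch3
open Scratch Scratch2

noncomputable def liftPt (M : ℕ) (a b : ℤ) : ℤ :=
  if ((a - b : ℤ) : ZMod M) = 0 then a
  else if ((a - b : ℤ) : ZMod M) = 1 then a - 1
  else if ((a - b : ℤ) : ZMod M) = -1 then a + 1
  else b

lemma liftPt_dvd (M : ℕ) (a b : ℤ) : (M : ℤ) ∣ liftPt M a b - b := by
  unfold liftPt
  split_ifs with h0 h1 h2
  · rw [ZMod.intCast_zmod_eq_zero_iff_dvd] at h0; exact h0
  · have h : ((a - b - 1 : ℤ) : ZMod M) = 0 := by push_cast; rw [sub_eq_zero]; exact_mod_cast h1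
    rw [ZMod.intCast_zmod_eq_zero_iff_dvd] at h
    have e : a - 1 - b = a - b - 1 := by ring
    rw [e]; exact h
  · have h : ((a - b + 1 : ℤ) : ZMod M) = 0 := by
      push_cast; rw [← sub_neg_eq_add, sub_eq_zero]; exact_mod_cast h2
    rw [ZMod.intCast_zmod_eq_zero_iff_dvd] at h
    have e : a + 1 - b = a - b + 1 := by ring
    rw [e]; exact h
  · simp

lemma liftPt_spec0 {M : ℕ} {a b : ℤ} (h : ((a - b : ℤ) : ZMod M) = 0) :
    liftPt M a b = a := by unfold liftPt; rw [if_pos h]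

lemma liftPt_spec1 {M : ℕ} (hM : 3 ≤ M) {a b : ℤ} (h : ((a - b : ℤ) : ZMod M) = 1) :
    liftPt M a b = a - 1 := by
  unfold liftPt
  rw [if_neg (by rw [h]; exact one_ne_zero' hM), if_pos h]

lemma liftPt_spec2 {M : ℕ} (hM : 3 ≤ M) {a b : ℤ} (h : ((a - b : ℤ) : ZMod M) = -1) :
    liftPt M a b = a + 1 := by
  unfold liftPt
  rw [if_neg (by rw [h]; exact neg_one_ne_zero' hM),
    if_neg (by rw [h]; intro hh; exact one_ne_neg_one' hM hh.symm), if_pos h]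

lemma liftPt_specbad {M : ℕ} {a b : ℤ}
    (h : ¬(((a - b : ℤ) : ZMod M) = 0 ∨ ((a - b : ℤ) : ZMod M) = 1 ∨
      ((a - b : ℤ) : ZMod M) = -1)) :
    liftPt M a b = b := by
  unfold liftPt
  rw [if_neg (by tauto), if_neg (by tauto), if_neg (by tauto)]

lemma lift_exists (n : ℕ) (m : Fin n → ℕ) (hm : ∀ i, 3 ≤ m i) (u v : Fin n → ℤ) :
    ∃ v' : Fin n → ℤ, (∀ i, (m i : ℤ) ∣ v' i - v i) ∧
      trho n u v' = ttrho n m (pmap m u) (pmap m v) := by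
  classical
  refine ⟨fun i => liftPt (m i) (u i) (v i), fun i => liftPt_dvd _ _ _, ?_⟩
  by_cases hgood : ∀ i, ((u i - v i : ℤ) : ZMod (m i)) = 0 ∨
      ((u i - v i : ℤ) : ZMod (m i)) = 1 ∨ ((u i - v i : ℤ) : ZMod (m i)) = -1
  · unfold trho ttrho
    rw [if_pos ?c0, if_pos ?c1]
    case c0 =>
      intro i
      dsimp only
      rcases hgood i with h0 | h1 | h2
      · rw [liftPt_spec0 h0]; simp
      · rw [liftPt_spec1 (hm i) h1]; rw [show u i - (u i - 1) = 1 by ring]; norm_num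
      · rw [liftPt_spec2 (hm i) h2]; rw [show u i - (u i + 1) = -1 by ring]; norm_num
    case c1 =>
      intro i
      simp only [pmap_eq_iff, sub_cast]
      exact hgood i
    congr 1
    apply Finset.filter_congr
    intro i _
    dsimp only
    simp only [ne_eq, eq_iff_iff]
    rcases hgood i with h0 | h1 | h2
    · rw [liftPt_spec0 h0, pmap_eq_iff]
      simp [h0]
    · rw [liftPt_spec1 (hm i) h1, pmap_eq_iff]
      constructor
      · intro _; rw [h1]; exact one_ne_zero' (hm i)
      · intro _; omega
    · rw [liftPt_spec2 (hm i) h2, pmap_eq_iff]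
      constructor
      · intro _; rw [h2]; exact neg_one_ne_zero' (hm i)
      · intro _; omega
  · push_neg at hgood
    obtain ⟨i0, hbad⟩ : ∃ i0, ¬(((u i0 - v i0 : ℤ) : ZMod (m i0)) = 0 ∨
        ((u i0 - v i0 : ℤ) : ZMod (m i0)) = 1 ∨ ((u i0 - v i0 : ℤ) : ZMod (m i0)) = -1) := by
      obtain ⟨i0, h1, h2, h3⟩ := hgood
      exact ⟨i0, by tauto⟩
    unfold trho ttrho
    rw [if_neg ?c2, if_neg ?c3]
    case c3 =>
      intro hc
      have := hc i0
      simp only [pmap_eq_iff, sub_cast] at this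
      exact hbad this
    case c2 =>
      intro hc
      have h := hc i0
      dsimp only at h
      rw [liftPt_specbad hbad] at h
      exact hbad (coe_cases h)

end Scratch3

namespace Scratch4
open Scratch Scratch2 Scratch3

lemma single_shift {n : ℕ} {S : Set (Fin n → ℤ)} {p : Fin n → ℕ}
    (hper : ∀ i : Fin n, ∀ v : Fin n → ℤ,
      v ∈ S ↔ v + (p i : ℤ) • Pi.single i (1 : ℤ) ∈ S)
    (i : Fin n) (c : ℤ) : ∀ v : Fin n → ℤ,
    v ∈ S ↔ v + (c * (p i : ℤ)) • Pi.single i (1 : ℤ) ∈ S := by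
  induction c using Int.induction_on with
  | zero => simp
  | succ c ih =>
    intro v
    have e : v + ((c + 1 : ℤ) * (p i : ℤ)) • Pi.single i (1 : ℤ)
        = (v + (c * (p i : ℤ)) • Pi.single i (1 : ℤ)) + (p i : ℤ) • Pi.single i (1 : ℤ) := by
      rw [add_assoc, ← add_smul]; ring_nf
    rw [e, ← hper i, ← ih]
  | pred c ih =>
    intro v
    have e : v + ((-c : ℤ) * (p i : ℤ)) • Pi.single i (1 : ℤ)
        = (v + ((-c - 1 : ℤ) * (p i : ℤ)) • Pi.single i (1 : ℤ)) + (p i : ℤ) • Pi.single i (1 : ℤ) := by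
      rw [add_assoc, ← add_smul]; ring_nf
    rw [ih v, e, ← hper i]

lemma shift_mem {n : ℕ} {S : Set (Fin n → ℤ)} {p : Fin n → ℕ}
    (hper : ∀ i : Fin n, ∀ v : Fin n → ℤ,
      v ∈ S ↔ v + (p i : ℤ) • Pi.single i (1 : ℤ) ∈ S)
    {s v : Fin n → ℤ} (hs : s ∈ S) (hd : ∀ i, (p i : ℤ) ∣ v i - s i) : v ∈ S := by
  classical
  choose c hc using hd
  have key : ∀ F : Finset (Fin n),
      s + ∑ i ∈ F, (c i * (p i : ℤ)) • Pi.single i (1 : ℤ) ∈ S := by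
    intro F
    induction F using Finset.induction with
    | empty => simpa using hs
    | insert a F' hnot ih =>
      rw [Finset.sum_insert hnot]
      have e : s + ((c a * (p a : ℤ)) • Pi.single a (1 : ℤ)
          + ∑ i ∈ F', (c i * (p i : ℤ)) • Pi.single i (1 : ℤ))
          = (s + ∑ i ∈ F', (c i * (p i : ℤ)) • Pi.single i (1 : ℤ))
            + (c a * (p a : ℤ)) • Pi.single a (1 : ℤ) := by abel
      rw [e, ← single_shift hper a (c a)]
      exact ih
  have hv : v = s + ∑ i : Fin n, (c i * (p i : ℤ)) • Pi.single i (1 : ℤ) := by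
    funext j
    have hcj := hc j
    simp only [Pi.add_apply, Finset.sum_apply, Pi.smul_apply, Pi.single_apply,
      smul_eq_mul, mul_ite, mul_one, mul_zero]
    rw [Finset.sum_ite_eq Finset.univ j (fun i => c i * (p i : ℤ))]
    simp only [Finset.mem_univ, if_pos]
    have : v j - s j = (p j : ℤ) * c j := hcj
    linarith [mul_comm (c j) ((p j : ℕ) : ℤ)]
  rw [hv]
  exact key Finset.univ

end Scratch4

namespace Scratch5
open Scratch Scratch2 Scratch3 Scratch4

lemma grid_adj {n : ℕ} {u v : Fin n → ℤ} (h : (gridGraph n).Adj u v) :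
    ∃ i, |u i - v i| = 1 ∧ ∀ j, j ≠ i → u j = v j := by
  have h' : ∑ i, |u i - v i| = 1 := h
  have hex : ∃ i, u i ≠ v i := by
    by_contra hc
    push_neg at hc
    rw [Finset.sum_eq_zero (fun i _ => by rw [hc i]; simp)] at h'
    exact absurd h' (by norm_num)
  obtain ⟨i, hi⟩ := hex
  have h1 : 1 ≤ |u i - v i| := Int.one_le_abs (sub_ne_zero.mpr hi)
  have hsplit : |u i - v i| + ∑ j ∈ Finset.univ.erase i, |u j - v j| = 1 := by
    rw [Finset.add_sum_erase Finset.univ (fun j => |u j - v j|) (Finset.mem_univ i)]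
    exact h'
  have hnn : 0 ≤ ∑ j ∈ Finset.univ.erase i, |u j - v j| :=
    Finset.sum_nonneg fun j _ => abs_nonneg _
  have habs : |u i - v i| = 1 := by linarith
  have hzero : ∑ j ∈ Finset.univ.erase i, |u j - v j| = 0 := by linarith
  refine ⟨i, habs, fun j hj => ?_⟩
  have := (Finset.sum_eq_zero_iff_of_nonneg fun j _ => abs_nonneg _).mp hzero j
    (Finset.mem_erase.mpr ⟨hj, Finset.mem_univ j⟩)
  have := abs_eq_zero.mp this
  linarith

lemma adj_map {n : ℕ} (m : Fin n → ℕ) (hm : ∀ i, 3 ≤ m i) {u v : Fin n → ℤ}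
    (h : (gridGraph n).Adj u v) : (torusGraph n m).Adj (pmap m u) (pmap m v) := by
  obtain ⟨i, hi, hj⟩ := grid_adj h
  have habs : u i - v i = 1 ∨ u i - v i = -1 := by
    rcases abs_eq (by norm_num : (0:ℤ) ≤ 1) |>.mp hi with h' | h'
    · exact Or.inl h'
    · exact Or.inr h'
  constructor
  · intro heq
    have : pmap m u i = pmap m v i := congrFun heq i
    rw [pmap_eq_iff] at this
    rcases habs with h' | h'
    · rw [h'] at this; exact one_ne_zero' (hm i) (by exact_mod_cast this)
    · rw [h'] at this; exact neg_one_ne_zero' (hm i) (by exact_mod_cast this)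
  · refine ⟨i, ?_, fun j hj' => by simp [pmap, hj j hj']⟩
    rcases habs with h' | h'
    · right
      have : u i = v i + 1 := by linarith
      simp only [pmap, this]
      push_cast
      ring
    · left
      have : u i = v i - 1 := by linarith
      simp only [pmap, this]
      push_cast
      ring

lemma pmap_eq_of_dvd {n : ℕ} (m : Fin n → ℕ) {a b : Fin n → ℤ}
    (h : ∀ i, (m i : ℤ) ∣ a i - b i) : pmap m a = pmap m b := by
  funext i
  have h0 : ((a i - b i : ℤ) : ZMod (m i)) = 0 :=
    (ZMod.intCast_zmod_eq_zero_iff_dvd _ _).mpr (h i)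
  rw [← sub_cast n m a b i, sub_eq_zero] at h0
  exact h0

lemma exists_preimage {n : ℕ} (m : Fin n → ℕ) (hm : ∀ i, 1 ≤ m i) (y : Π i, ZMod (m i)) :
    ∃ u : Fin n → ℤ, pmap m u = y := by
  refine ⟨fun i => ((y i).val : ℤ), funext fun i => ?_⟩
  haveI : NeZero (m i) := ⟨by have := hm i; omega⟩
  show (((((y i).val : ℤ)) : ZMod (m i))) = y i
  push_cast
  exact ZMod.natCast_rightInverse (y i)

-- sInf helpers
lemma trhoSet_le {n : ℕ} {u s : Fin n → ℤ} {S : Set (Fin n → ℤ)} (hs : s ∈ S) :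
    trhoSet n u S ≤ trho n u s := Nat.sInf_le ⟨s, hs, rfl⟩

lemma exists_trhoSet {n : ℕ} {u : Fin n → ℤ} {S : Set (Fin n → ℤ)} (hS : S.Nonempty) :
    ∃ s ∈ S, trho n u s = trhoSet n u S := by
  obtain ⟨s0, hs0⟩ := hS
  exact Nat.sInf_mem (⟨trho n u s0, s0, hs0, rfl⟩ : {d | ∃ s ∈ S, trho n u s = d}.Nonempty)

lemma ttrhoSet_le {n : ℕ} {m : Fin n → ℕ} {u s : Π i, ZMod (m i)} {S : Set (Π i, ZMod (m i))}
    (hs : s ∈ S) : ttrhoSet n m u S ≤ ttrho n m u s := Nat.sInf_le ⟨s, hs, rfl⟩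

lemma exists_ttrhoSet {n : ℕ} {m : Fin n → ℕ} {u : Π i, ZMod (m i)} {S : Set (Π i, ZMod (m i))}
    (hS : S.Nonempty) : ∃ s ∈ S, ttrho n m u s = ttrhoSet n m u S := by
  obtain ⟨s0, hs0⟩ := hS
  exact Nat.sInf_mem (⟨ttrho n m u s0, s0, hs0, rfl⟩ : {d | ∃ s ∈ S, ttrho n m u s = d}.Nonempty)

end Scratch5

namespace Scratch6
open Scratch Scratch2 Scratch3 Scratch4 Scratch5

lemma main_aux (n t : ℕ) (S : Set (Fin n → ℤ)) (hS : IsPTMC n t S)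
    (p : Fin n → ℕ)
    (hper : ∀ i : Fin n, ∀ v : Fin n → ℤ,
      v ∈ S ↔ v + (p i : ℤ) • Pi.single i (1 : ℤ) ∈ S)
    (m : Fin n → ℕ) (hm3 : ∀ i, 3 ≤ m i) (hpm : ∀ i, (p i : ℤ) ∣ (m i : ℤ)) :
    IsTorusPTMC n m t (pmap m '' S) := by
  classical
  set pS := pmap m '' S with hpSdef
  have hm1 : ∀ i, 1 ≤ m i := fun i => le_trans (by norm_num) (hm3 i)
  -- lift points of pS
  have hlift : ∀ (u : Fin n → ℤ) (y : Π i, ZMod (m i)), y ∈ pS →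
      ∃ s' ∈ S, pmap m s' = y ∧ trho n u s' = ttrho n m (pmap m u) y := by
    rintro u y ⟨v, hv, rfl⟩
    obtain ⟨v', hdvd, htr⟩ := lift_exists n m hm3 u v
    have hdvd' : ∀ i, (p i : ℤ) ∣ v' i - v i := fun i => dvd_trans (hpm i) (hdvd i)
    exact ⟨v', shift_mem hper hv hdvd', pmap_eq_of_dvd m hdvd, htr⟩
  -- the graph homomorphism
  let F : ((gridGraph n).induce S) →g ((torusGraph n m).induce pS) :=
    ⟨fun x => ⟨pmap m x.1, Set.mem_image_of_mem _ x.2⟩, fun {a b} hab => adj_map m hm3 hab⟩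
  have hcomp : ∀ (a b : Fin n → ℤ) (ha : a ∈ S) (hb : b ∈ S),
      ((gridGraph n).induce S).connectedComponentMk ⟨a, ha⟩ =
        ((gridGraph n).induce S).connectedComponentMk ⟨b, hb⟩ →
      ((torusGraph n m).induce pS).connectedComponentMk
          ⟨pmap m a, Set.mem_image_of_mem _ ha⟩ =
        ((torusGraph n m).induce pS).connectedComponentMk
          ⟨pmap m b, Set.mem_image_of_mem _ hb⟩ := by
    intro a b ha hb hab
    rw [SimpleGraph.ConnectedComponent.eq] at hab ⊢
    exact hab.map F
  constructor
  · -- condition (i)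
    intro ub
    obtain ⟨u, rfl⟩ := exists_preimage m hm1 ub
    obtain ⟨s, ⟨hsS, hseq⟩, huniq⟩ := hS.1 u
    have hpSne : pS.Nonempty := ⟨pmap m s, Set.mem_image_of_mem _ hsS⟩
    obtain ⟨y₀, hy₀pS, hy₀eq⟩ := exists_ttrhoSet (u := pmap m u) hpSne
    obtain ⟨s₁, hs₁S, hps₁, htr₁⟩ := hlift u y₀ hy₀pS
    have heq : trhoSet n u S = ttrhoSet n m (pmap m u) pS := by
      apply le_antisymm
      · calc trhoSet n u S ≤ trho n u s₁ := trhoSet_le hs₁S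
          _ = ttrho n m (pmap m u) y₀ := htr₁
          _ = ttrhoSet n m (pmap m u) pS := hy₀eq
      · calc ttrhoSet n m (pmap m u) pS ≤ ttrho n m (pmap m u) (pmap m s) :=
            ttrhoSet_le (Set.mem_image_of_mem _ hsS)
          _ ≤ trho n u s := ttrho_pmap_le n m u s
          _ = trhoSet n u S := hseq
    refine ⟨pmap m s, ⟨Set.mem_image_of_mem _ hsS, ?_⟩, ?_⟩
    · apply le_antisymm
      · calc ttrho n m (pmap m u) (pmap m s) ≤ trho n u s := ttrho_pmap_le n m u s
          _ = trhoSet n u S := hseq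
          _ = ttrhoSet n m (pmap m u) pS := heq
      · exact ttrhoSet_le (Set.mem_image_of_mem _ hsS)
    · rintro y ⟨hypS, hyeq⟩
      obtain ⟨s₂, hs₂S, hps₂, htr₂⟩ := hlift u y hypS
      have h2 : trho n u s₂ = trhoSet n u S := by rw [htr₂, hyeq, ← heq]
      have hss := huniq s₂ ⟨hs₂S, h2⟩
      rw [← hps₂, hss]
  · -- condition (ii)
    intro ub
    obtain ⟨u, rfl⟩ := exists_preimage m hm1 ub
    obtain ⟨H, hHle, hHuniq⟩ := hS.2 u
    obtain ⟨w, hwmk⟩ := H.exists_rep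
    have hwmem : (w : Fin n → ℤ) ∈ compVerts n S H := ⟨w.2, by rwa [Subtype.coe_eta]⟩
    obtain ⟨s, hscomp, hseq⟩ := exists_trhoSet (u := u) ⟨(w : Fin n → ℤ), hwmem⟩
    obtain ⟨hsS, hsmk⟩ := hscomp
    refine ⟨((torusGraph n m).induce pS).connectedComponentMk
        ⟨pmap m s, Set.mem_image_of_mem _ hsS⟩, ?_, ?_⟩
    · refine le_trans (ttrhoSet_le ⟨Set.mem_image_of_mem _ hsS, rfl⟩) ?_
      calc ttrho n m (pmap m u) (pmap m s) ≤ trho n u s := ttrho_pmap_le n m u s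
        _ = trhoSet n u (compVerts n S H) := hseq
        _ ≤ t := hHle
    · intro H'' hH''
      obtain ⟨z, hzmk⟩ := H''.exists_rep
      have hzmem : (z : Π i, ZMod (m i)) ∈ tCompVerts n m pS H'' :=
        ⟨z.2, by rwa [Subtype.coe_eta]⟩
      obtain ⟨y, hycomp, hyeq⟩ := exists_ttrhoSet (u := pmap m u)
        ⟨(z : Π i, ZMod (m i)), hzmem⟩
      obtain ⟨hypS, hymk⟩ := hycomp
      obtain ⟨s₂, hs₂S, hps₂, htr₂⟩ := hlift u y hypS
      have hs₂le : trhoSet n u (compVerts n S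
          (((gridGraph n).induce S).connectedComponentMk ⟨s₂, hs₂S⟩)) ≤ t := by
        refine le_trans (trhoSet_le ⟨hs₂S, rfl⟩) ?_
        rw [htr₂, hyeq]; exact hH''
      have hcompeq := hHuniq _ hs₂le
      have hup : ((gridGraph n).induce S).connectedComponentMk ⟨s₂, hs₂S⟩ =
          ((gridGraph n).induce S).connectedComponentMk ⟨s, hsS⟩ := by rw [hcompeq, hsmk]
      have hdown := hcomp s₂ s hs₂S hsS hup
      subst hps₂
      rw [← hymk]
      exact hdown

end Scratch6


/-- Coordinatewise reduction of a periodic `t`-PTMC of `Λ_n` with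
periods `p i` yields a `t`-PTMC of the toroidal grid with circumferences `m i = k i * p i`
(each `≥ 3`). -/
theorem stmt_12 (n t : ℕ) (hn : 1 ≤ n) (ht : 1 ≤ t) (S : Set (Fin n → ℤ))
    (hS : IsPTMC n t S) (p k : Fin n → ℕ) (hp : ∀ i, 1 ≤ p i) (hk : ∀ i, 1 ≤ k i)
    (hper : ∀ i : Fin n, ∀ v : Fin n → ℤ,
      v ∈ S ↔ v + (p i : ℤ) • Pi.single i (1 : ℤ) ∈ S)
    (hm : ∀ i, 3 ≤ k i * p i) :
    IsTorusPTMC n (fun i => k i * p i) t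
      ((fun v : Fin n → ℤ => fun i => ((v i : ℤ) : ZMod (k i * p i))) '' S) := by
  exact Scratch6.main_aux n t S hS p hper (fun i => k i * p i) hm
    (fun i => ⟨(k i : ℤ), by push_cast; ring⟩)
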